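/- Suppose 𝒫 is stable under F°-pasting. Let τ be an F°-stopping time taking finitely many values, let X ∈ L¹_𝒫 and let P ∈ 𝒫. Then there exists a sequence (Pₙ)_{n≥1} in 𝒫(F°_τ,P) such that the sequence of random variables E^{Pₙ}[X|F°_τ] is P-a.s. nondecreasing in n and its P-a.s. pointwise limit is a P-essential supremum of the family {E^{P'}[X|F°_τ] : P' ∈ 𝒫(F°_τ,P)}. -/

import Mathlib

open MeasureTheory Set Filter

noncomputable section

/-- The canonical path space: continuous paths in `ℝ^d` starting at `0`
(paths indexed by `ℝ`; only the restriction to `[0,T]` is ever used). -/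
def PathSpace (d : ℕ) : Type :=
  {ω : C(ℝ, EuclideanSpace ℝ (Fin d)) // ω 0 = 0}

/-- The raw σ-algebra `F°_t = σ(B_s ; 0 ≤ s ≤ t)` generated by the canonical process. -/
def rawSA (d : ℕ) (t : ℝ) : MeasurableSpace (PathSpace d) :=
  ⨆ s ∈ Set.Icc (0 : ℝ) t, MeasurableSpace.comap (fun ω : PathSpace d => ω.1 s) inferInstance

lemma rawSA_mono {d : ℕ} : Monotone (rawSA d) := by
  intro s t hst
  refine iSup₂_le fun u hu => ?_
  exact le_iSup₂_of_le u ⟨hu.1, hu.2.trans hst⟩ le_rfl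

/-- The raw filtration `F°`, as a filtration indexed by `ℝ` (constant after time `T`),
with ambient σ-algebra `F°_T`. -/
def rawFilt (T : ℝ) (d : ℕ) : Filtration ℝ (rawSA d T) where
  seq t := rawSA d (min t T)
  mono' := fun _ _ hst => rawSA_mono (min_le_min hst le_rfl)
  le' := fun t => rawSA_mono (min_le_right t T)

/-- A bounded function. -/
def BddFun {α : Type*} (f : α → ℝ) : Prop := ∃ C : ℝ, ∀ x, |f x| ≤ C

/-- `Y` is a `P`-essential supremum of the family `F` of random variables. -/
def IsEssSupOf {α : Type*} {m0 : MeasurableSpace α} (P : @Measure α m0) (F : Set (α → ℝ))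
    (Y : α → ℝ) : Prop :=
  (∀ f ∈ F, f ≤ᵐ[P] Y) ∧ ∀ Z : α → ℝ, (∀ f ∈ F, f ≤ᵐ[P] Z) → Y ≤ᵐ[P] Z

/-- Two measures agree on the σ-algebra `G`. -/
def EqOnSA {α : Type*} {m0 : MeasurableSpace α} (G : MeasurableSpace α)
    (P Q : @Measure α m0) : Prop :=
  ∀ A : Set α, MeasurableSet[G] A → P A = Q A

/-- `𝔓(G, P) = {P' ∈ 𝔓 : P' = P on G}`. -/
def MSet {α : Type*} {m0 : MeasurableSpace α} (𝔓 : Set (@Measure α m0))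
    (G : MeasurableSpace α) (P : @Measure α m0) : Set (@Measure α m0) :=
  {Q ∈ 𝔓 | EqOnSA G Q P}

/-- The family `{E^{P'}[X | G] : P' ∈ 𝔓(G, P)}` of conditional expectations. -/
def condExpFam {α : Type*} {m0 : MeasurableSpace α} (𝔓 : Set (@Measure α m0))
    (G : MeasurableSpace α) (P : @Measure α m0) (X : α → ℝ) : Set (α → ℝ) :=
  {g | ∃ Q ∈ MSet 𝔓 G P, g = condExp G Q X}

/-- `X ∈ L¹_𝔓` : `mT`-measurable with `sup_{P ∈ 𝔓} E^P[|X|] < ∞`. -/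
def MemL1 {α : Type*} {m0 : MeasurableSpace α} (mT : MeasurableSpace α)
    (𝔓 : Set (@Measure α m0)) (X : α → ℝ) : Prop :=
  Measurable[mT] X ∧ (∀ P ∈ 𝔓, Integrable X P) ∧ ∃ M : ℝ, ∀ P ∈ 𝔓, ∫ ω, |X ω| ∂P ≤ M

/-- `Pb` is the pasting of `(P₁, P₂)` over `(Λ, G)` under `P`, characterized through
integrals of bounded measurable functions. -/
def IsPastingOf {α : Type*} {m0 : MeasurableSpace α} (mT : MeasurableSpace α)
    (G : MeasurableSpace α) (P P₁ P₂ Pb : @Measure α m0) (Λ : Set α) : Prop :=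
  ∀ h : α → ℝ, Measurable[mT] h → BddFun h →
    ∫ x, h x ∂Pb
      = ∫ x, (Λ.indicator (condExp G P₁ h) x + Λᶜ.indicator (condExp G P₂ h) x) ∂P

/-- `𝔓` is stable under `F°`-pasting (along finite-valued `F°`-stopping times). -/
def StableUnderPasting (T : ℝ) (d : ℕ)
    (𝔓 : Set (@Measure (PathSpace d) (rawSA d T))) : Prop :=
  ∀ P ∈ 𝔓, ∀ τ : PathSpace d → ℝ, ∀ hτ : IsStoppingTime (rawFilt T d) (fun ω => (τ ω : WithTop ℝ)),
    (Set.range τ).Finite → (∀ ω, τ ω ∈ Set.Icc (0 : ℝ) T) →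
    ∀ Λ : Set (PathSpace d), MeasurableSet[hτ.measurableSpace] Λ →
    ∀ P₁ ∈ MSet 𝔓 hτ.measurableSpace P, ∀ P₂ ∈ MSet 𝔓 hτ.measurableSpace P,
    ∀ Pb : @Measure (PathSpace d) (rawSA d T),
      IsPastingOf (rawSA d T) hτ.measurableSpace P P₁ P₂ Pb Λ → Pb ∈ 𝔓

end


noncomputable section

namespace PasteAux

variable {α : Type*} {G : MeasurableSpace α} {m0 : MeasurableSpace α}

theorem trim_eq_of_eqOnSA (hG : G ≤ m0) {P Q : @Measure α m0}
    (h : EqOnSA G Q P) : Q.trim hG = P.trim hG := by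
  refine @Measure.ext α G _ _ fun s hs => ?_
  rw [trim_measurableSet_eq hG hs, trim_measurableSet_eq hG hs]
  exact h s hs

theorem integral_eq_of_eqOnSA (hG : G ≤ m0) {P Q : @Measure α m0}
    (h : EqOnSA G Q P) {f : α → ℝ} (hf : StronglyMeasurable[G] f) :
    ∫ x, f x ∂Q = ∫ x, f x ∂P := by
  rw [integral_trim hG hf, integral_trim hG hf, trim_eq_of_eqOnSA hG h]

theorem integrable_of_eqOnSA (hG : G ≤ m0) {P Q : @Measure α m0}
    (h : EqOnSA G Q P) {f : α → ℝ} (hf : StronglyMeasurable[G] f)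
    (hfi : Integrable f Q) : Integrable f P := by
  refine integrable_of_integrable_trim hG ?_
  rw [← trim_eq_of_eqOnSA hG h]
  exact hfi.trim hG hf

theorem ae_of_eqOnSA (hG : G ≤ m0) {P Q : @Measure α m0}
    (h : EqOnSA G Q P) {p : α → Prop} (hp : MeasurableSet[G] {x | p x})
    (hae : ∀ᵐ x ∂Q, p x) : ∀ᵐ x ∂P, p x := by
  rw [ae_iff] at hae ⊢
  have he : {x | ¬ p x} = {x | p x}ᶜ := rfl
  rw [he] at hae ⊢
  rw [← h _ hp.compl]
  exact hae

theorem integrable_of_bddFun {μ : @Measure α m0} [IsFiniteMeasure μ] {h : α → ℝ}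
    (hm : Measurable h) (hb : BddFun h) : Integrable h μ := by
  obtain ⟨C, hC⟩ := hb
  have hc : Integrable (fun _ : α => C) μ := integrable_const C
  exact hc.mono' hm.aestronglyMeasurable
    (ae_of_all _ fun x => by simpa [Real.norm_eq_abs] using hC x)

variable {P Q₁ Q₂ : @Measure α m0}

theorem paste_eqOnSA (hG : G ≤ m0) (h1 : EqOnSA G Q₁ P) (h2 : EqOnSA G Q₂ P)
    {Λ : Set α} (hΛ : MeasurableSet[G] Λ) :
    EqOnSA G (Q₁.restrict Λ + Q₂.restrict Λᶜ) P := by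
  intro A hA
  have hAm : MeasurableSet[m0] A := hG _ hA
  have hΛm : MeasurableSet[m0] Λ := hG _ hΛ
  rw [Measure.add_apply, Measure.restrict_apply hAm, Measure.restrict_apply hAm,
    h1 _ (hA.inter hΛ), h2 _ (hA.inter hΛ.compl), ← Set.diff_eq,
    measure_inter_add_diff A hΛm]

theorem paste_isProb (hG : G ≤ m0) [IsProbabilityMeasure P]
    (h1 : EqOnSA G Q₁ P) (h2 : EqOnSA G Q₂ P)
    {Λ : Set α} (hΛ : MeasurableSet[G] Λ) :
    IsProbabilityMeasure (Q₁.restrict Λ + Q₂.restrict Λᶜ) := by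
  constructor
  rw [paste_eqOnSA hG h1 h2 hΛ univ MeasurableSet.univ]
  exact measure_univ

theorem paste_integral (hG : G ≤ m0) [IsProbabilityMeasure P]
    [IsProbabilityMeasure Q₁] [IsProbabilityMeasure Q₂]
    (h1 : EqOnSA G Q₁ P) (h2 : EqOnSA G Q₂ P) {Λ : Set α} (hΛ : MeasurableSet[G] Λ)
    {h : α → ℝ} (hh : Measurable h) (hbd : BddFun h) :
    ∫ x, h x ∂(Q₁.restrict Λ + Q₂.restrict Λᶜ)
      = ∫ x, (Λ.indicator (condExp G Q₁ h) x + Λᶜ.indicator (condExp G Q₂ h) x) ∂P := by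
  have hΛm : MeasurableSet[m0] Λ := hG _ hΛ
  have hi1 : Integrable h Q₁ := integrable_of_bddFun hh hbd
  have hi2 : Integrable h Q₂ := integrable_of_bddFun hh hbd
  have hsm1 : StronglyMeasurable[G] (Λ.indicator (condExp G Q₁ h)) :=
    stronglyMeasurable_condExp.indicator hΛ
  have hsm2 : StronglyMeasurable[G] (Λᶜ.indicator (condExp G Q₂ h)) :=
    stronglyMeasurable_condExp.indicator hΛ.compl
  have hint1P : Integrable (Λ.indicator (condExp G Q₁ h)) P :=
    integrable_of_eqOnSA hG h1 hsm1 (integrable_condExp.indicator hΛm)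
  have hint2P : Integrable (Λᶜ.indicator (condExp G Q₂ h)) P :=
    integrable_of_eqOnSA hG h2 hsm2 (integrable_condExp.indicator hΛm.compl)
  rw [integral_add_measure hi1.integrableOn hi2.integrableOn, integral_add hint1P hint2P]
  congr 1
  · rw [← integral_eq_of_eqOnSA hG h1 hsm1, integral_indicator hΛm,
      setIntegral_condExp hG hi1 hΛ]
  · rw [← integral_eq_of_eqOnSA hG h2 hsm2, integral_indicator hΛm.compl,
      setIntegral_condExp hG hi2 hΛ.compl]

theorem paste_condexp (hG : G ≤ m0) [IsProbabilityMeasure P]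
    [IsProbabilityMeasure Q₁] [IsProbabilityMeasure Q₂]
    (h1 : EqOnSA G Q₁ P) (h2 : EqOnSA G Q₂ P) {Λ : Set α} (hΛ : MeasurableSet[G] Λ)
    {X : α → ℝ} (hX1 : Integrable X Q₁) (hX2 : Integrable X Q₂)
    (hXb : Integrable X (Q₁.restrict Λ + Q₂.restrict Λᶜ)) :
    condExp G (Q₁.restrict Λ + Q₂.restrict Λᶜ) X
      =ᵐ[P] fun x => Λ.indicator (condExp G Q₁ X) x + Λᶜ.indicator (condExp G Q₂ X) x := by
  set Pb := Q₁.restrict Λ + Q₂.restrict Λᶜ with hPbdef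
  haveI : IsProbabilityMeasure Pb := paste_isProb hG h1 h2 hΛ
  have hΛm : MeasurableSet[m0] Λ := hG _ hΛ
  set g := fun x => Λ.indicator (condExp G Q₁ X) x + Λᶜ.indicator (condExp G Q₂ X) x with hgdef
  have hgsm : StronglyMeasurable[G] g :=
    (stronglyMeasurable_condExp.indicator hΛ).add (stronglyMeasurable_condExp.indicator hΛ.compl)
  have hPbP : EqOnSA G Pb P := paste_eqOnSA hG h1 h2 hΛ
  have hPPb : EqOnSA G P Pb := fun A hA => (hPbP A hA).symm
  have hc1b : Integrable (condExp G Q₁ X) Pb :=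
    integrable_of_eqOnSA hG hPPb stronglyMeasurable_condExp
      (integrable_of_eqOnSA hG h1 stronglyMeasurable_condExp integrable_condExp)
  have hc2b : Integrable (condExp G Q₂ X) Pb :=
    integrable_of_eqOnSA hG hPPb stronglyMeasurable_condExp
      (integrable_of_eqOnSA hG h2 stronglyMeasurable_condExp integrable_condExp)
  have hgintb : Integrable g Pb := (hc1b.indicator hΛm).add (hc2b.indicator hΛm.compl)
  have key : ∀ s, MeasurableSet[G] s → ∫ x in s, g x ∂Pb = ∫ x in s, X x ∂Pb := by
    intro s hs
    have hsm : MeasurableSet[m0] s := hG _ hs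
    have res1 : Pb.restrict (s ∩ Λ) = Q₁.restrict (s ∩ Λ) := by
      have e1 : (s ∩ Λ) ∩ Λ = s ∩ Λ := by rw [Set.inter_assoc, Set.inter_self]
      have e2 : (s ∩ Λ) ∩ Λᶜ = ∅ := by
        rw [Set.inter_assoc, Set.inter_compl_self, Set.inter_empty]
      rw [hPbdef, Measure.restrict_add, Measure.restrict_restrict (hsm.inter hΛm),
        Measure.restrict_restrict (hsm.inter hΛm), e1, e2, Measure.restrict_empty, add_zero]
    have res2 : Pb.restrict (s ∩ Λᶜ) = Q₂.restrict (s ∩ Λᶜ) := by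
      have e1 : (s ∩ Λᶜ) ∩ Λᶜ = s ∩ Λᶜ := by rw [Set.inter_assoc, Set.inter_self]
      have e2 : (s ∩ Λᶜ) ∩ Λ = ∅ := by
        rw [Set.inter_assoc, Set.compl_inter_self, Set.inter_empty]
      rw [hPbdef, Measure.restrict_add, Measure.restrict_restrict (hsm.inter hΛm.compl),
        Measure.restrict_restrict (hsm.inter hΛm.compl), e1, e2, Measure.restrict_empty,
        zero_add]
    have hR : ∫ x in s, X x ∂Pb = (∫ x in s ∩ Λ, X x ∂Q₁) + ∫ x in s ∩ Λᶜ, X x ∂Q₂ := by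
      rw [hPbdef, Measure.restrict_add, Measure.restrict_restrict hsm,
        Measure.restrict_restrict hsm,
        integral_add_measure hX1.integrableOn hX2.integrableOn]
    calc ∫ x in s, g x ∂Pb
        = (∫ x in s, Λ.indicator (condExp G Q₁ X) x ∂Pb)
            + ∫ x in s, Λᶜ.indicator (condExp G Q₂ X) x ∂Pb :=
          integral_add (hc1b.indicator hΛm).integrableOn (hc2b.indicator hΛm.compl).integrableOn
      _ = (∫ x in s ∩ Λ, condExp G Q₁ X x ∂Pb) + ∫ x in s ∩ Λᶜ, condExp G Q₂ X x ∂Pb := by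
          rw [setIntegral_indicator hΛm, setIntegral_indicator hΛm.compl]
      _ = (∫ x in s ∩ Λ, condExp G Q₁ X x ∂Q₁) + ∫ x in s ∩ Λᶜ, condExp G Q₂ X x ∂Q₂ := by
          rw [res1, res2]
      _ = (∫ x in s ∩ Λ, X x ∂Q₁) + ∫ x in s ∩ Λᶜ, X x ∂Q₂ := by
          rw [setIntegral_condExp hG hX1 (hs.inter hΛ),
            setIntegral_condExp hG hX2 (hs.inter hΛ.compl)]
      _ = ∫ x in s, X x ∂Pb := hR.symm
  have hae : g =ᵐ[Pb] condExp G Pb X :=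
    ae_eq_condExp_of_forall_setIntegral_eq hG hXb
      (fun s hs _ => hgintb.integrableOn)
      (fun s hs _ => key s hs)
      (hgsm.aestronglyMeasurable)
  have hset : MeasurableSet[G] {x | condExp G Pb X x = g x} :=
    MeasureTheory.StronglyMeasurable.measurableSet_eq_fun stronglyMeasurable_condExp hgsm
  exact ae_of_eqOnSA hG hPbP hset hae.symm

end PasteAux

end

namespace PasteAux2

open Real PasteAux
open scoped ENNReal

theorem exists_seq_essSup {α : Type*} {G : MeasurableSpace α} {m0 : MeasurableSpace α}
    (hG : G ≤ m0) {X : α → ℝ}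
    (M : Set (@Measure α m0)) (P : @Measure α m0) [IsProbabilityMeasure P] (hPM : P ∈ M)
    (hprob : ∀ Q ∈ M, IsProbabilityMeasure Q)
    (heq : ∀ Q ∈ M, EqOnSA G Q P)
    (hXint : ∀ Q ∈ M, Integrable X Q)
    {Mbd : ℝ} (hXbd : ∀ Q ∈ M, ∫ x, |X x| ∂Q ≤ Mbd)
    (hdir : ∀ Q₁ ∈ M, ∀ Q₂ ∈ M, ∃ Q₃ ∈ M,
      condExp G Q₃ X =ᵐ[P] fun x => max (condExp G Q₁ X x) (condExp G Q₂ X x)) :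
    ∃ (Pn : ℕ → @Measure α m0) (Y : α → ℝ),
      (∀ n, Pn n ∈ M) ∧
      (∀ᵐ x ∂P, Monotone fun n => condExp G (Pn n) X x) ∧
      (∀ᵐ x ∂P, Tendsto (fun n => condExp G (Pn n) X x) atTop (nhds (Y x))) ∧
      (∀ Q ∈ M, condExp G Q X ≤ᵐ[P] Y) ∧
      (∀ Z : α → ℝ, (∀ Q ∈ M, condExp G Q X ≤ᵐ[P] Z) → Y ≤ᵐ[P] Z) := by
  classical
  have hmeasQ : ∀ Q : @Measure α m0, Measurable (condExp G Q X) := fun Q =>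
    (stronglyMeasurable_condExp.mono hG).measurable
  have hintP : ∀ Q ∈ M, Integrable (condExp G Q X) P := fun Q hQ =>
    integrable_of_eqOnSA hG (heq Q hQ) stronglyMeasurable_condExp integrable_condExp
  have hintegral : ∀ Q ∈ M, ∫ x, condExp G Q X x ∂P = ∫ x, X x ∂Q := by
    intro Q hQ
    haveI := hprob Q hQ
    rw [← integral_eq_of_eqOnSA hG (heq Q hQ) stronglyMeasurable_condExp]
    exact integral_condExp hG
  have hintbd : ∀ Q ∈ M, -Mbd ≤ (∫ x, condExp G Q X x ∂P)
      ∧ (∫ x, condExp G Q X x ∂P) ≤ Mbd := by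
    intro Q hQ
    rw [hintegral Q hQ]
    have h1 : |∫ x, X x ∂Q| ≤ ∫ x, |X x| ∂Q := by
      simpa [Real.norm_eq_abs] using norm_integral_le_integral_norm (f := X) (μ := Q)
    have h2 := abs_le.mp (h1.trans (hXbd Q hQ))
    exact ⟨h2.1, h2.2⟩
  have harctan_abs : ∀ y : ℝ, |Real.arctan y| ≤ Real.pi / 2 := fun y =>
    abs_le.2 ⟨by linarith [Real.neg_pi_div_two_lt_arctan y], (Real.arctan_lt_pi_div_two y).le⟩
  have harctan_int : ∀ f : α → ℝ, Measurable f →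
      Integrable (fun x => Real.arctan (f x)) P := fun f hf =>
    integrable_of_bddFun (Real.measurable_arctan.comp hf) ⟨Real.pi/2, fun x => harctan_abs _⟩
  set s : Set ℝ := (fun Q : @Measure α m0 => ∫ x, Real.arctan (condExp G Q X x) ∂P) '' M
    with hs_def
  have hs_ne : s.Nonempty := ⟨_, ⟨P, hPM, rfl⟩⟩
  have hs_bdd : BddAbove s := by
    refine ⟨Real.pi/2, ?_⟩
    rintro r ⟨Q, hQ, rfl⟩
    calc ∫ x, Real.arctan (condExp G Q X x) ∂P
        ≤ ∫ _x, Real.pi/2 ∂P := integral_mono (harctan_int _ (hmeasQ Q))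
            (integrable_const _) (fun x => (Real.arctan_lt_pi_div_two _).le)
      _ = Real.pi/2 := by simp
  set m := sSup s with hm_def
  obtain ⟨u, hu_mono, hu_tend, hu_mem⟩ := exists_seq_tendsto_sSup hs_ne hs_bdd
  choose Q hQM hQeq using fun n => hu_mem n
  let F : ℕ → {R : @Measure α m0 // R ∈ M} := fun n =>
    Nat.rec ⟨Q 0, hQM 0⟩
      (fun k Fk => ⟨(hdir Fk.1 Fk.2 (Q (k+1)) (hQM (k+1))).choose,
        ((hdir Fk.1 Fk.2 (Q (k+1)) (hQM (k+1))).choose_spec).1⟩) n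
  set f : ℕ → α → ℝ := fun n => condExp G (F n).1 X with hf_def
  have hFsucc : ∀ n, f (n+1) =ᵐ[P]
      fun x => max (f n x) (condExp G (Q (n+1)) X x) := fun n =>
    ((hdir (F n).1 (F n).2 (Q (n+1)) (hQM (n+1))).choose_spec).2
  have hmono_succ_ae : ∀ᵐ x ∂P, ∀ n, f n x ≤ f (n+1) x := by
    rw [ae_all_iff]
    intro n
    filter_upwards [hFsucc n] with x hx
    rw [hx]
    exact le_max_left _ _
  have hdom_ae : ∀ᵐ x ∂P, ∀ n, condExp G (Q n) X x ≤ f n x := by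
    rw [ae_all_iff]
    intro n
    cases n with
    | zero => exact ae_of_all _ fun x => le_rfl
    | succ k =>
      filter_upwards [hFsucc k] with x hx
      rw [hx]
      exact le_max_right _ _
  have hfint : ∀ n, Integrable (f n) P := fun n => hintP _ (F n).2
  have hfbd : ∀ n, -Mbd ≤ (∫ x, f n x ∂P) ∧ (∫ x, f n x ∂P) ≤ Mbd :=
    fun n => hintbd _ (F n).2
  set g : ℕ → α → ENNReal := fun n x => ENNReal.ofReal (f n x - f 0 x) with hg_def
  have hgmeas : ∀ n, Measurable (g n) := fun n =>
    ((hmeasQ (F n).1).sub (hmeasQ (F 0).1)).ennreal_ofReal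
  have hgmono : ∀ᵐ x ∂P, Monotone fun n => g n x := by
    filter_upwards [hmono_succ_ae] with x hx
    have hfx : Monotone fun n => f n x := monotone_nat_of_le_succ hx
    intro a b hab
    exact ENNReal.ofReal_le_ofReal (sub_le_sub_right (hfx hab) _)
  have hglint : ∀ n, (∫⁻ x, g n x ∂P) ≤ ENNReal.ofReal (2*Mbd) := by
    intro n
    have hint : Integrable (fun x => f n x - f 0 x) P := (hfint n).sub (hfint 0)
    have hnn : 0 ≤ᵐ[P] fun x => f n x - f 0 x := by
      filter_upwards [hmono_succ_ae] with x hx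
      have hfx : Monotone fun n => f n x := monotone_nat_of_le_succ hx
      exact sub_nonneg.2 (hfx (Nat.zero_le n))
    rw [hg_def, ← ofReal_integral_eq_lintegral_ofReal hint hnn]
    apply ENNReal.ofReal_le_ofReal
    rw [integral_sub (hfint n) (hfint 0)]
    linarith [(hfbd n).2, (hfbd 0).1]
  have hSlint : (∫⁻ x, ⨆ n, g n x ∂P) ≠ ∞ := by
    rw [lintegral_iSup' (fun n => (hgmeas n).aemeasurable) hgmono]
    exact ((iSup_le hglint).trans_lt ENNReal.ofReal_lt_top).ne
  have hSfin : ∀ᵐ x ∂P, (⨆ n, g n x) < ∞ :=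
    ae_lt_top' (Measurable.iSup hgmeas).aemeasurable hSlint
  set Y : α → ℝ := fun x => f 0 x + (⨆ n, g n x).toReal with hY_def
  have hYmeas : Measurable Y :=
    (hmeasQ (F 0).1).add (Measurable.iSup hgmeas).ennreal_toReal
  have htend : ∀ᵐ x ∂P, Tendsto (fun n => f n x) atTop (nhds (Y x)) := by
    filter_upwards [hmono_succ_ae, hSfin] with x hx hfin
    have hfx : Monotone fun n => f n x := monotone_nat_of_le_succ hx
    have hub : ∀ n, f n x ≤ Y x := by
      intro n
      have h1 : g n x ≤ ⨆ k, g k x := le_iSup (fun k => g k x) n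
      have h2 : (g n x).toReal ≤ (⨆ k, g k x).toReal := ENNReal.toReal_mono hfin.ne h1
      have h3 : (g n x).toReal = f n x - f 0 x :=
        ENNReal.toReal_ofReal (sub_nonneg.2 (hfx (Nat.zero_le n)))
      rw [h3] at h2
      simp only [hY_def]
      linarith
    have hbdd : BddAbove (Set.range fun n => f n x) :=
      ⟨Y x, by rintro r ⟨n, rfl⟩; exact hub n⟩
    have htc := tendsto_atTop_ciSup hfx hbdd
    have hL : (⨆ n, f n x) = Y x := by
      refine le_antisymm (ciSup_le hub) ?_
      have h0 : f 0 x ≤ ⨆ n, f n x := le_ciSup hbdd 0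
      have hS : (⨆ n, g n x) ≤ ENNReal.ofReal ((⨆ n, f n x) - f 0 x) :=
        iSup_le fun n => ENNReal.ofReal_le_ofReal (sub_le_sub_right (le_ciSup hbdd n) _)
      have hS2 : (⨆ n, g n x).toReal ≤ (⨆ n, f n x) - f 0 x := by
        have h4 := ENNReal.toReal_mono ENNReal.ofReal_ne_top hS
        rwa [ENNReal.toReal_ofReal (by linarith)] at h4
      simp only [hY_def]
      linarith
    rwa [hL] at htc
  have hfm_le : ∀ n, (∫ x, Real.arctan (f n x) ∂P) ≤ m := fun n =>
    le_csSup hs_bdd ⟨(F n).1, (F n).2, rfl⟩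
  have hQn_le : ∀ n, u n ≤ ∫ x, Real.arctan (f n x) ∂P := by
    intro n
    have h0 : u n = ∫ x, Real.arctan (condExp G (Q n) X x) ∂P := (hQeq n).symm
    rw [h0]
    refine integral_mono_ae (harctan_int _ (hmeasQ (Q n))) (harctan_int _ (hmeasQ (F n).1)) ?_
    filter_upwards [hdom_ae] with x hx
    exact Real.arctan_strictMono.monotone (hx n)
  have hfm_tend : Tendsto (fun n => ∫ x, Real.arctan (f n x) ∂P) atTop (nhds m) :=
    tendsto_of_tendsto_of_tendsto_of_le_of_le hu_tend tendsto_const_nhds hQn_le hfm_le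
  have hdc : Tendsto (fun n => ∫ x, Real.arctan (f n x) ∂P) atTop
      (nhds (∫ x, Real.arctan (Y x) ∂P)) := by
    refine tendsto_integral_of_dominated_convergence (fun _ => Real.pi/2)
      (fun n => (Real.measurable_arctan.comp (hmeasQ (F n).1)).aestronglyMeasurable)
      (integrable_const _)
      (fun n => ae_of_all _ fun x => by
        simpa [Real.norm_eq_abs] using harctan_abs (f n x)) ?_
    filter_upwards [htend] with x hx
    exact (Real.continuous_arctan.tendsto _).comp hx
  have hYm_eq : ∫ x, Real.arctan (Y x) ∂P = m := tendsto_nhds_unique hdc hfm_tend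
  have hupper : ∀ Q' ∈ M, condExp G Q' X ≤ᵐ[P] Y := by
    intro Q' hQ'
    set c := condExp G Q' X with hc_def
    have hRn : ∀ n, (∫ x, Real.arctan (max (f n x) (c x)) ∂P) ≤ m := by
      intro n
      obtain ⟨W, hWM, hWe⟩ := hdir (F n).1 (F n).2 Q' hQ'
      have he : ∫ x, Real.arctan (max (f n x) (c x)) ∂P
          = ∫ x, Real.arctan (condExp G W X x) ∂P := by
        refine integral_congr_ae ?_
        filter_upwards [hWe] with x hx
        rw [hx]
      rw [he]
      exact le_csSup hs_bdd ⟨W, hWM, rfl⟩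
    have hmxmeas : Measurable fun x => max (Y x) (c x) := hYmeas.max (hmeasQ Q')
    have hlim2 : Tendsto (fun n => ∫ x, Real.arctan (max (f n x) (c x)) ∂P)
        atTop (nhds (∫ x, Real.arctan (max (Y x) (c x)) ∂P)) := by
      refine tendsto_integral_of_dominated_convergence (fun _ => Real.pi/2)
        (fun n => (Real.measurable_arctan.comp
          ((hmeasQ (F n).1).max (hmeasQ Q'))).aestronglyMeasurable)
        (integrable_const _)
        (fun n => ae_of_all _ fun x => by
          simpa [Real.norm_eq_abs] using harctan_abs (max (f n x) (c x))) ?_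
      filter_upwards [htend] with x hx
      exact (Real.continuous_arctan.tendsto _).comp (hx.max tendsto_const_nhds)
    have hle : (∫ x, Real.arctan (max (Y x) (c x)) ∂P) ≤ m :=
      le_of_tendsto hlim2 (Filter.Eventually.of_forall hRn)
    set D := fun x => Real.arctan (max (Y x) (c x)) - Real.arctan (Y x) with hD_def
    have hDint : Integrable D P := (harctan_int _ hmxmeas).sub (harctan_int _ hYmeas)
    have hDnn : 0 ≤ᵐ[P] D := ae_of_all _ fun x =>
      sub_nonneg.2 (Real.arctan_strictMono.monotone (le_max_left _ _))
    have hDzero : ∫ x, D x ∂P = 0 := by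
      have h1 : (∫ x, D x ∂P) ≤ 0 := by
        rw [hD_def]
        rw [integral_sub (harctan_int _ hmxmeas) (harctan_int _ hYmeas), hYm_eq]
        linarith
      have h2 : 0 ≤ ∫ x, D x ∂P := integral_nonneg_of_ae hDnn
      linarith
    have hae0 := (integral_eq_zero_iff_of_nonneg_ae hDnn hDint).mp hDzero
    filter_upwards [hae0] with x hx
    have hx' : Real.arctan (max (Y x) (c x)) = Real.arctan (Y x) := by
      have : D x = 0 := hx
      rw [hD_def] at this
      simpa [sub_eq_zero] using this
    have hmx : max (Y x) (c x) = Y x := Real.arctan_injective hx'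
    exact max_eq_left_iff.mp hmx
  have hmin : ∀ Z : α → ℝ, (∀ Q ∈ M, condExp G Q X ≤ᵐ[P] Z) → Y ≤ᵐ[P] Z := by
    intro Z hZ
    have h1 : ∀ᵐ x ∂P, ∀ n, f n x ≤ Z x := ae_all_iff.2 fun n => hZ (F n).1 (F n).2
    filter_upwards [h1, htend] with x hx hxt
    exact le_of_tendsto hxt (Filter.Eventually.of_forall hx)
  refine ⟨fun n => (F n).1, Y, fun n => (F n).2, ?_, htend, hupper, hmin⟩
  filter_upwards [hmono_succ_ae] with x hx
  exact monotone_nat_of_le_succ hx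

end PasteAux2


/-- under stability under pasting, the essential supremum of the family of
conditional expectations is attained as an increasing limit along a sequence in `𝔓(F°_τ, P)`. -/
theorem statement1 {T : ℝ} (hT : 0 < T) {d : ℕ}
    (𝔓 : Set (@Measure (PathSpace d) (rawSA d T))) (h𝔓 : 𝔓.Nonempty)
    (hprob : ∀ P ∈ 𝔓, IsProbabilityMeasure P)
    (hstable : StableUnderPasting T d 𝔓)
    (τ : PathSpace d → ℝ) (hτ : IsStoppingTime (rawFilt T d) (fun ω => (τ ω : WithTop ℝ)))
    (hτfin : (Set.range τ).Finite) (hτmem : ∀ ω, τ ω ∈ Set.Icc (0 : ℝ) T)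
    (X : PathSpace d → ℝ) (hX : MemL1 (rawSA d T) 𝔓 X)
    (P : @Measure (PathSpace d) (rawSA d T)) (hP : P ∈ 𝔓) :
    ∃ (Pn : ℕ → @Measure (PathSpace d) (rawSA d T)) (Y : PathSpace d → ℝ),
      (∀ n, Pn n ∈ MSet 𝔓 hτ.measurableSpace P) ∧
      (∀ᵐ ω ∂P, Monotone fun n => condExp hτ.measurableSpace (Pn n) X ω) ∧
      (∀ᵐ ω ∂P, Tendsto (fun n => condExp hτ.measurableSpace (Pn n) X ω) atTop (nhds (Y ω))) ∧
      IsEssSupOf P (condExpFam 𝔓 hτ.measurableSpace P X) Y := by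
  classical
  set G := hτ.measurableSpace with hG_def
  have hG : G ≤ rawSA d T := hτ.measurableSpace_le
  haveI : IsProbabilityMeasure P := hprob P hP
  obtain ⟨hXmeas, hXint, Mbd, hXbd⟩ := hX
  have hPM : P ∈ MSet 𝔓 G P := ⟨hP, fun A _ => rfl⟩
  have hdir : ∀ Q₁ ∈ MSet 𝔓 G P, ∀ Q₂ ∈ MSet 𝔓 G P, ∃ Q₃ ∈ MSet 𝔓 G P,
      condExp G Q₃ X =ᵐ[P] fun x => max (condExp G Q₁ X x) (condExp G Q₂ X x) := by
    intro Q₁ hQ₁ Q₂ hQ₂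
    haveI := hprob Q₁ hQ₁.1
    haveI := hprob Q₂ hQ₂.1
    set Λ := {x | condExp G Q₂ X x ≤ condExp G Q₁ X x} with hΛdef
    have hΛ : MeasurableSet[G] Λ :=
      measurableSet_le stronglyMeasurable_condExp.measurable
        stronglyMeasurable_condExp.measurable
    set Pb := Q₁.restrict Λ + Q₂.restrict Λᶜ with hPbdef
    have hpaste : IsPastingOf (rawSA d T) G P Q₁ Q₂ Pb Λ := by
      intro h hh hbd
      exact PasteAux.paste_integral hG hQ₁.2 hQ₂.2 hΛ hh hbd
    have hPb𝔓 : Pb ∈ 𝔓 := hstable P hP τ hτ hτfin hτmem Λ hΛ Q₁ hQ₁ Q₂ hQ₂ Pb hpaste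
    have hPbM : Pb ∈ MSet 𝔓 G P := ⟨hPb𝔓, PasteAux.paste_eqOnSA hG hQ₁.2 hQ₂.2 hΛ⟩
    refine ⟨Pb, hPbM, ?_⟩
    have hce := PasteAux.paste_condexp hG hQ₁.2 hQ₂.2 hΛ (hXint Q₁ hQ₁.1) (hXint Q₂ hQ₂.1)
      (hXint Pb hPb𝔓)
    refine hce.trans (Filter.Eventually.of_forall fun x => ?_)
    by_cases hx : x ∈ Λ
    · have hx' : x ∉ Λᶜ := fun hc => hc hx
      simp only [Set.indicator_of_mem hx, Set.indicator_of_notMem hx', add_zero]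
      exact (max_eq_left (hx : condExp G Q₂ X x ≤ condExp G Q₁ X x)).symm
    · have hx' : x ∈ Λᶜ := hx
      simp only [Set.indicator_of_notMem hx, Set.indicator_of_mem hx', zero_add]
      exact (max_eq_right (le_of_not_ge (hx : ¬ condExp G Q₂ X x ≤ condExp G Q₁ X x))).symm
  obtain ⟨Pn, Y, h1, h2, h3, h4, h5⟩ :=
    PasteAux2.exists_seq_essSup hG (MSet 𝔓 G P) P hPM
      (fun Q hQ => hprob Q hQ.1) (fun Q hQ => hQ.2)
      (fun Q hQ => hXint Q hQ.1) (fun Q hQ => hXbd Q hQ.1) hdir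
  refine ⟨Pn, Y, h1, h2, h3, ?_, ?_⟩
  · rintro g ⟨Q, hQ, rfl⟩
    exact h4 Q hQ
  · intro Z hZ
    exact h5 Z fun Q hQ => hZ _ ⟨Q, hQ, rfl⟩
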